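/- arXiv:math/0611249 — 2 statements merged into one kernel-verified Lean document; each statement's English description precedes it below -/
import Mathlib

section
/- (Runge's theorem) Let K ⊆ ℂ be compact with ℂ ∖ K connected. Then for every function f that is holomorphic on some open neighborhood of K there exists a sequence of holomorphic polynomials (polynomials in z with complex coefficients) converging uniformly on K to f. -/
open Filter MeasureTheory Set Metric Topology Real Manifold

lemma geom_diff (u v : ℂ) (hu : u ≠ 0) (huv : u - v ≠ 0) (N : ℕ) :
    1/(u - v) - ∑ n ∈ Finset.range N, v^n / u^(n+1) = v^N / (u^N * (u - v)) := by
  induction N with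
  | zero => simp
  | succ N ih =>
    rw [Finset.sum_range_succ, ← sub_sub, ih]
    have hpu : (u:ℂ)^N ≠ 0 := pow_ne_zero _ hu
    field_simp; ring

variable {K : Set ℂ}

/-- the identity function as an element of C(K, ℂ) -/
noncomputable def iota (K : Set ℂ) : C(K, ℂ) := ⟨fun z => (z : ℂ), continuous_subtype_val⟩

/-- restriction of a polynomial -/
noncomputable def polyRes (K : Set ℂ) (p : Polynomial ℂ) : C(K, ℂ) :=
  ⟨fun z => p.eval (z : ℂ), (p.continuous_aeval).comp continuous_subtype_val⟩

noncomputable def polyAlg (K : Set ℂ) [CompactSpace K] : Subalgebra ℂ C(K, ℂ) :=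
  (Algebra.adjoin ℂ {iota K}).topologicalClosure

lemma polyRes_mem [CompactSpace K] (p : Polynomial ℂ) : polyRes K p ∈ polyAlg K := by
  apply Subalgebra.le_topologicalClosure
  have : polyRes K p = Polynomial.aeval (iota K) p := by
    ext z
    simp only [polyRes, ContinuousMap.coe_mk]
    induction p using Polynomial.induction_on with
    | C a => simp [iota]
    | add p q hp hq => simp_all [iota]
    | monomial n a h => simp_all [pow_succ, iota, mul_assoc]
  rw [this]
  exact Polynomial.aeval_mem_adjoin_singleton ℂ _

noncomputable def pole (K : Set ℂ) (w : ℂ) (hw : w ∉ K) : C(K, ℂ) :=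
  ⟨fun z => (w - (z : ℂ))⁻¹, by
    apply Continuous.inv₀ (by fun_prop)
    rintro ⟨z, hz⟩
    simp only [sub_ne_zero]
    rintro rfl; exact hw hz⟩

lemma pole_apply (w : ℂ) (hw : w ∉ K) (z : K) : pole K w hw z = (w - (z : ℂ))⁻¹ := rfl

lemma continuous_pole [CompactSpace K] :
    Continuous fun w : ↥(Kᶜ) => pole K (w : ℂ) w.2 := by
  have hcont : Continuous fun p : ↥(Kᶜ) × K => ((p.1 : ℂ) - (p.2 : ℂ))⁻¹ := by
    apply Continuous.inv₀ (by fun_prop)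
    rintro ⟨⟨w, hw⟩, ⟨z, hz⟩⟩
    simp only [sub_ne_zero]
    rintro rfl; exact hw hz
  have := (ContinuousMap.mk _ hcont).curry.continuous
  exact this

lemma isClosed_polyAlg [CompactSpace K] : IsClosed (polyAlg K : Set C(K, ℂ)) := by
  rw [polyAlg, Subalgebra.topologicalClosure_coe]
  exact isClosed_closure

lemma mem_polyAlg_of_approx [CompactSpace K] {g : C(K, ℂ)} (P : ℕ → C(K, ℂ))
    (hmem : ∀ N, P N ∈ polyAlg K) (b : ℕ → ℝ) (hb : Tendsto b atTop (𝓝 0))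
    (hbd : ∀ N, ∀ z : K, ‖P N z - g z‖ ≤ b N) : g ∈ polyAlg K := by
  have ht : Tendsto P atTop (𝓝 g) := by
    rw [tendsto_iff_dist_tendsto_zero]
    refine squeeze_zero (fun N => dist_nonneg) (fun N => ?_) (by simpa using hb.abs)
    refine (ContinuousMap.dist_le (abs_nonneg _)).mpr fun z => ?_
    rw [dist_eq_norm]
    exact (hbd N z).trans (le_abs_self _)
  exact isClosed_polyAlg.mem_of_tendsto ht (Eventually.of_forall hmem)

lemma pole_mem (hK : IsCompact K) [CompactSpace K] (hne : K.Nonempty)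
    (hconn : IsConnected Kᶜ) {w : ℂ} (hw : w ∉ K) :
    pole K w hw ∈ polyAlg K := by
  set A : Set ↥(Kᶜ) := {w : ↥(Kᶜ) | pole K w.1 w.2 ∈ polyAlg K} with hA
  have hclosed : IsClosed A := isClosed_polyAlg.preimage continuous_pole
  have hopen : IsOpen A := by
    rw [Metric.isOpen_iff]
    rintro ⟨w, hwc⟩ hwA
    have hwK : w ∉ K := hwc
    have hd : 0 < infDist w K := by
      rw [← hK.isClosed.closure_eq, mem_closure_iff_infDist_zero hne] at hwK
      exact lt_of_le_of_ne infDist_nonneg (Ne.symm hwK)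
    set d := infDist w K with hddef
    refine ⟨d / 2, by positivity, ?_⟩
    rintro ⟨w', hw'c⟩ hball
    have hdist : dist w' w < d / 2 := by
      simpa [Subtype.dist_eq] using hball
    have hw'K : w' ∉ K := hw'c
    -- uniform bounds
    have hu : ∀ z : K, d ≤ ‖w - (z : ℂ)‖ := fun z =>
      (infDist_le_dist_of_mem z.2).trans_eq (dist_eq_norm _ _)
    have huv : ∀ z : K, d / 2 ≤ ‖w' - (z : ℂ)‖ := by
      intro z
      have h1 : ‖w - (z : ℂ)‖ - ‖w - w'‖ ≤ ‖w' - (z : ℂ)‖ := by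
        have := norm_sub_norm_le (w - (z : ℂ)) (w - w')
        simpa using this
      have h2 : ‖w - w'‖ < d / 2 := by
        rw [← dist_eq_norm, dist_comm]
        exact hdist
      nlinarith [hu z]
    set v : ℂ := w - w' with hv
    set c : ℝ := ‖v‖ / d with hc
    have hvn : ‖v‖ < d / 2 := by
      rw [hv, ← dist_eq_norm, dist_comm]; exact hdist
    have hc1 : c < 1 := by
      rw [hc, div_lt_one hd]; linarith
    have hc0 : 0 ≤ c := by positivity
    refine mem_polyAlg_of_approx
      (fun N => ∑ n ∈ Finset.range N, v ^ n • (pole K w hwK) ^ (n + 1))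
      (fun N => Subalgebra.sum_mem _ fun n _ => Subalgebra.smul_mem _ (Subalgebra.pow_mem _ hwA _) _)
      (fun N => c ^ N * (2 / d)) ?_ ?_
    · have := (tendsto_pow_atTop_nhds_zero_of_lt_one hc0 hc1).mul_const (2 / d)
      simpa using this
    · intro N z
      have huz : w - (z : ℂ) ≠ 0 := by
        intro h
        have := hu z; rw [h, norm_zero] at this; linarith
      have huvz : (w - (z : ℂ)) - v ≠ 0 := by
        have h : (w - (z : ℂ)) - v = w' - (z : ℂ) := by rw [hv]; ring
        rw [h]
        intro h0
        have := huv z; rw [h0, norm_zero] at this; linarith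
      have heval : (∑ n ∈ Finset.range N, v ^ n • (pole K w hwK) ^ (n + 1)) z
          = ∑ n ∈ Finset.range N, v ^ n / (w - (z : ℂ)) ^ (n + 1) := by
        simp [pole, div_eq_mul_inv, inv_pow]
      have hpw' : pole K w' hw'K z = 1 / ((w - (z : ℂ)) - v) := by
        rw [pole_apply, one_div, hv]; ring_nf
      rw [heval, hpw']
      have hgeom := geom_diff (w - (z : ℂ)) v huz huvz N
      have : (∑ n ∈ Finset.range N, v ^ n / (w - (z : ℂ)) ^ (n + 1))
          - 1 / ((w - (z : ℂ)) - v)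
          = -(v ^ N / ((w - (z : ℂ)) ^ N * ((w - (z : ℂ)) - v))) := by
        rw [← hgeom]; ring
      rw [this, norm_neg, norm_div, norm_mul, norm_pow, norm_pow]
      have hbound : d ^ N * (d / 2) ≤ ‖w - (z : ℂ)‖ ^ N * ‖(w - (z : ℂ)) - v‖ := by
        have h : (w - (z : ℂ)) - v = w' - (z : ℂ) := by rw [hv]; ring
        rw [h]
        exact mul_le_mul (pow_le_pow_left₀ hd.le (hu z) N) (huv z) (by positivity)
          (by positivity)
      calc ‖v‖ ^ N / (‖w - (z : ℂ)‖ ^ N * ‖(w - (z : ℂ)) - v‖)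
          ≤ ‖v‖ ^ N / (d ^ N * (d / 2)) := by
            apply div_le_div_of_nonneg_left (by positivity) (by positivity) hbound
        _ = c ^ N * (2 / d) := by
            rw [hc, div_pow]
            field_simp
  -- A is nonempty: a point far away
  obtain ⟨r, hr⟩ := hK.isBounded.subset_closedBall 0
  set R : ℝ := max r 0 with hR
  have hRK : ∀ z ∈ K, ‖z‖ ≤ R := fun z hz => le_trans (by simpa using hr hz) (le_max_left _ _)
  set w₀ : ℂ := ((R + 1 : ℝ) : ℂ) with hw₀
  have hw₀n : ‖w₀‖ = R + 1 := by
    rw [hw₀, Complex.norm_real, Real.norm_eq_abs, abs_of_pos (by positivity)]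
  have hw₀K : w₀ ∉ K := by
    intro h
    have := hRK _ h
    rw [hw₀n] at this; linarith
  have hw₀uv : ∀ z : K, 1 ≤ ‖w₀ - (z : ℂ)‖ := by
    intro z
    have h1 := norm_sub_norm_le w₀ (z : ℂ)
    have := hRK _ z.2
    rw [hw₀n] at h1
    linarith
  have hw₀A : (⟨w₀, hw₀K⟩ : ↥(Kᶜ)) ∈ A := by
    set c : ℝ := R / (R + 1) with hc
    have hc0 : 0 ≤ c := by positivity
    have hc1 : c < 1 := by rw [hc, div_lt_one (by positivity)]; linarith
    refine mem_polyAlg_of_approx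
      (fun N => ∑ n ∈ Finset.range N, (w₀ ^ (n + 1))⁻¹ • (iota K) ^ n)
      (fun N => Subalgebra.sum_mem _ fun n _ => Subalgebra.smul_mem _
        (Subalgebra.le_topologicalClosure _
          (Subalgebra.pow_mem _ (Algebra.subset_adjoin (mem_singleton _)) _)) _)
      (fun N => c ^ N) (tendsto_pow_atTop_nhds_zero_of_lt_one hc0 hc1) ?_
    intro N z
    have hu0 : w₀ ≠ 0 := by
      intro h; rw [h, norm_zero] at hw₀n; linarith [le_max_right r 0]
    have huv0 : w₀ - (z : ℂ) ≠ 0 := by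
      intro h0
      have := hw₀uv z; rw [h0, norm_zero] at this; linarith
    have heval : (∑ n ∈ Finset.range N, (w₀ ^ (n + 1))⁻¹ • (iota K) ^ n) z
        = ∑ n ∈ Finset.range N, (z : ℂ) ^ n / w₀ ^ (n + 1) := by
      simp [iota, div_eq_mul_inv, mul_comm]
    have hpw : pole K w₀ hw₀K z = 1 / (w₀ - (z : ℂ)) := by
      rw [pole_apply, one_div]
    rw [heval, hpw]
    have hgeom := geom_diff w₀ (z : ℂ) hu0 huv0 N
    have : (∑ n ∈ Finset.range N, (z : ℂ) ^ n / w₀ ^ (n + 1)) - 1 / (w₀ - (z : ℂ))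
        = -((z : ℂ) ^ N / (w₀ ^ N * (w₀ - (z : ℂ)))) := by
      rw [← hgeom]; ring
    rw [this, norm_neg, norm_div, norm_mul, norm_pow, norm_pow, hw₀n]
    have h1 : (R + 1) ^ N * 1 ≤ (R + 1) ^ N * ‖w₀ - (z : ℂ)‖ :=
      mul_le_mul_of_nonneg_left (hw₀uv z) (by positivity)
    calc ‖(z : ℂ)‖ ^ N / ((R + 1) ^ N * ‖w₀ - (z : ℂ)‖)
        ≤ R ^ N / ((R + 1) ^ N * 1) := by
          apply div_le_div₀ (by positivity)
            (pow_le_pow_left₀ (norm_nonneg _) (hRK _ z.2) N) (by positivity) h1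
      _ = c ^ N := by rw [hc, div_pow]; ring
  -- clopen in connected space
  have : ConnectedSpace ↥(Kᶜ) := Subtype.connectedSpace hconn
  rcases isClopen_iff.mp ⟨hclosed, hopen⟩ with h | h
  · rw [h] at hw₀A; exact absurd hw₀A (notMem_empty _)
  · have : (⟨w, hw⟩ : ↥(Kᶜ)) ∈ A := by rw [h]; trivial
    exact this

lemma polyRes_eq_aeval {K : Set ℂ} [CompactSpace K] (p : Polynomial ℂ) :
    polyRes K p = Polynomial.aeval (iota K) p := by
  ext z
  simp only [polyRes, ContinuousMap.coe_mk]
  induction p using Polynomial.induction_on with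
  | C a => simp [iota]
  | add p q hp hq => simp_all [iota]
  | monomial n a h => simp_all [pow_succ, iota, mul_assoc]

lemma real_smul_mem {K : Set ℂ} [CompactSpace K] {h : C(K, ℂ)} (hh : h ∈ polyAlg K) (r : ℝ) :
    r • h ∈ polyAlg K := by
  have : r • h = ((r : ℂ)) • h := by ext z; simp [Complex.real_smul]
  rw [this]
  exact Subalgebra.smul_mem _ hh _

noncomputable def dbar (g : ℂ → ℂ) (w : ℂ) : ℂ :=
  fderiv ℝ g w 1 + Complex.I * fderiv ℝ g w Complex.I

lemma keyid (L : ℂ →L[ℝ] ℂ) (θ : ℝ) :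
    L (Complex.exp (θ * Complex.I)) + Complex.I * L (Complex.I * Complex.exp (θ * Complex.I))
      = Complex.exp (-(θ * Complex.I)) * (L 1 + Complex.I * L Complex.I) := by
  have h1 : Complex.exp ((θ : ℂ) * Complex.I)
      = (Real.cos θ) • (1 : ℂ) + (Real.sin θ) • Complex.I := by
    rw [Complex.exp_mul_I]
    simp [Complex.real_smul, Complex.ofReal_cos, Complex.ofReal_sin]
  have h2 : Complex.I * Complex.exp ((θ : ℂ) * Complex.I)
      = (-Real.sin θ) • (1 : ℂ) + (Real.cos θ) • Complex.I := by
    rw [h1]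
    simp only [Complex.real_smul]
    push_cast [← Complex.ofReal_sin, ← Complex.ofReal_cos]
    linear_combination (Real.sin θ : ℂ) * Complex.I_sq
  have h3 : Complex.exp (-((θ : ℂ) * Complex.I))
      = (Real.cos θ : ℂ) - (Real.sin θ : ℂ) * Complex.I := by
    rw [← neg_mul, Complex.exp_mul_I, Complex.cos_neg, Complex.sin_neg,
      ← Complex.ofReal_cos, ← Complex.ofReal_sin]
    ring
  rw [h2, h1, map_add, map_add, _root_.map_smul, _root_.map_smul, _root_.map_smul, _root_.map_smul, h3]
  simp only [Complex.real_smul]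
  push_cast [← Complex.ofReal_sin, ← Complex.ofReal_cos]
  linear_combination (Real.sin θ : ℂ) * (L Complex.I) * Complex.I_sq

theorem pompeiu_zero (g : ℂ → ℂ) (hg : ContDiff ℝ 1 g) (hsupp : HasCompactSupport g) :
    ∫ w : ℂ, dbar g w / w = -(2 * π) * g 0 := by
  classical
  obtain ⟨r, hr⟩ := hsupp.isBounded.subset_closedBall 0
  set R : ℝ := max r 0 + 1 with hRdef
  have hR0 : 0 < R := by positivity
  have hgz : ∀ w : ℂ, R ≤ ‖w‖ → g w = 0 := by
    intro w hw
    apply image_eq_zero_of_notMem_tsupport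
    intro hmem
    have h1 := hr hmem
    rw [mem_closedBall_zero_iff] at h1
    have : r ≤ max r 0 := le_max_left _ _
    linarith
  have hDz : ∀ w : ℂ, R ≤ ‖w‖ → fderiv ℝ g w = 0 := by
    intro w hw
    by_contra h
    have hmem : w ∈ tsupport g := support_fderiv_subset (𝕜 := ℝ) h
    have h1 := hr hmem
    rw [mem_closedBall_zero_iff] at h1
    have : r ≤ max r 0 := le_max_left _ _
    linarith
  have hgd : Differentiable ℝ g := hg.differentiable one_ne_zero
  set D : ℂ → ℂ →L[ℝ] ℂ := fderiv ℝ g with hD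
  have hDc : Continuous D := hg.continuous_fderiv one_ne_zero
  set E : ℝ → ℂ := fun θ => Complex.exp (θ * Complex.I) with hE
  have hEc : Continuous E := by
    exact Complex.continuous_exp.comp (by fun_prop)
  have hEnorm : ∀ θ, ‖E θ‖ = 1 := by
    intro θ
    simp [hE, Complex.norm_exp]
  have hEne : ∀ θ, E θ ≠ 0 := fun θ => Complex.exp_ne_zero _
  set Φ₁ : ℝ × ℝ → ℂ := fun p => D ((p.1 : ℂ) * E p.2) (E p.2) with hΦ₁
  set Φ₂ : ℝ × ℝ → ℂ := fun p => Complex.I * D ((p.1 : ℂ) * E p.2) (Complex.I * E p.2) with hΦ₂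
  have hwnorm : ∀ p : ℝ × ℝ, ‖(p.1 : ℂ) * E p.2‖ = |p.1| := by
    intro p
    rw [norm_mul, hEnorm, mul_one, Complex.norm_real, Real.norm_eq_abs]
  have hΦ₁c : Continuous Φ₁ :=
    (hDc.comp (by fun_prop)).clm_apply (hEc.comp continuous_snd)
  have hΦ₂c : Continuous Φ₂ :=
    continuous_const.mul ((hDc.comp (by fun_prop)).clm_apply
      (continuous_const.mul (hEc.comp continuous_snd)))
  have hΦ₁z : ∀ p : ℝ × ℝ, R ≤ |p.1| → Φ₁ p = 0 := by
    intro p hp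
    simp [hΦ₁, hDz _ ((hwnorm p).symm ▸ hp)]
  have hΦ₂z : ∀ p : ℝ × ℝ, R ≤ |p.1| → Φ₂ p = 0 := by
    intro p hp
    simp [hΦ₂, hDz _ ((hwnorm p).symm ▸ hp)]
  set T : Set (ℝ × ℝ) := Ioi (0 : ℝ) ×ˢ Ioo (-π) π with hT
  set B : Set (ℝ × ℝ) := Ioc (0 : ℝ) R ×ˢ Ioo (-π) π with hB
  have hmeasT : MeasurableSet T := measurableSet_Ioi.prod measurableSet_Ioo
  have hmeasB : MeasurableSet B := measurableSet_Ioc.prod measurableSet_Ioo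
  have hBT : B ⊆ T := prod_mono (Ioc_subset_Ioi_self) (subset_rfl)
  have hindic : ∀ Φ : ℝ × ℝ → ℂ, (∀ p, R ≤ |p.1| → Φ p = 0) →
      T.indicator Φ = B.indicator Φ := by
    intro Φ hz
    funext p
    by_cases h1 : p ∈ B
    · rw [indicator_of_mem h1, indicator_of_mem (hBT h1)]
    · rw [indicator_of_notMem h1]
      by_cases h2 : p ∈ T
      · rw [indicator_of_mem h2]
        obtain ⟨hp1, hp2⟩ := h2
        have : p.1 ∉ Ioc (0:ℝ) R := fun hc => h1 ⟨hc, hp2⟩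
        rw [mem_Ioc, not_and] at this
        have hpR : R < p.1 := lt_of_not_ge (this hp1)
        exact (hz p (le_trans hpR.le (le_abs_self _)))
      · rw [indicator_of_notMem h2]
  have hIB₁ : IntegrableOn Φ₁ B :=
    (hΦ₁c.continuousOn.integrableOn_compact (isCompact_Icc.prod isCompact_Icc)).mono_set
      (prod_mono Ioc_subset_Icc_self Ioo_subset_Icc_self)
  have hIB₂ : IntegrableOn Φ₂ B :=
    (hΦ₂c.continuousOn.integrableOn_compact (isCompact_Icc.prod isCompact_Icc)).mono_set
      (prod_mono Ioc_subset_Icc_self Ioo_subset_Icc_self)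
  have hIT₁ : IntegrableOn Φ₁ T := by
    rw [← integrable_indicator_iff hmeasT, hindic _ hΦ₁z,
      integrable_indicator_iff hmeasB]
    exact hIB₁
  have hIT₂ : IntegrableOn Φ₂ T := by
    rw [← integrable_indicator_iff hmeasT, hindic _ hΦ₂z,
      integrable_indicator_iff hmeasB]
    exact hIB₂
  have hTB : ∀ Φ : ℝ × ℝ → ℂ, (∀ p, R ≤ |p.1| → Φ p = 0) →
      ∫ p in T, Φ p = ∫ p in B, Φ p := by
    intro Φ hz
    rw [← integral_indicator hmeasT, ← integral_indicator hmeasB, hindic _ hz]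
  -- derivative in θ
  have hderivθ : ∀ (r θ : ℝ), HasDerivAt (fun t : ℝ => g ((r : ℂ) * E t))
      (D ((r : ℂ) * E θ) ((r : ℂ) * (E θ * Complex.I))) θ := by
    intro r θ
    have h0 : HasDerivAt (fun z : ℂ => Complex.exp (z * Complex.I))
        (Complex.exp ((θ : ℂ) * Complex.I) * Complex.I) (θ : ℂ) := by
      simpa using ((hasDerivAt_id ((θ : ℂ))).mul_const Complex.I).cexp
    have hEd : HasDerivAt E (E θ * Complex.I) θ := by
      simpa [hE] using h0.comp_ofReal
    have hin : HasDerivAt (fun t : ℝ => (r : ℂ) * E t) ((r : ℂ) * (E θ * Complex.I)) θ :=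
      hEd.const_mul _
    exact ((hgd _).hasFDerivAt).comp_hasDerivAt θ hin
  -- derivative in r
  have hderivr : ∀ (θ t : ℝ), HasDerivAt (fun t : ℝ => g ((t : ℂ) * E θ)) (Φ₁ (t, θ)) t := by
    intro θ t
    have hin : HasDerivAt (fun t : ℝ => (t : ℂ) * E θ) (E θ) t := by
      simpa using ((hasDerivAt_id ((t : ℂ))).mul_const (E θ)).comp_ofReal
    exact ((hgd _).hasFDerivAt).comp_hasDerivAt t hin
  -- polar coordinates
  have hpolar : ∫ w : ℂ, dbar g w / w = ∫ p in T, (Φ₁ p + Φ₂ p) := by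
    rw [← Complex.integral_comp_polarCoord_symm (fun w => dbar g w / w)]
    apply setIntegral_congr_fun hmeasT
    intro p hp
    have hp1 : (0 : ℝ) < p.1 := hp.1
    have hp1c : (p.1 : ℂ) ≠ 0 := by exact_mod_cast hp1.ne'
    have hsymm : Complex.polarCoord.symm p = (p.1 : ℂ) * Complex.exp (↑p.2 * Complex.I) := by
      rw [Complex.polarCoord_symm_apply, Complex.exp_mul_I, ← Complex.ofReal_cos,
        ← Complex.ofReal_sin]
    simp only [hΦ₁, hΦ₂, hE, hD]
    rw [hsymm]
    have hkey := keyid (fderiv ℝ g ((p.1 : ℂ) * Complex.exp (↑p.2 * Complex.I))) p.2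
    rw [hkey]
    simp only [dbar]
    rw [Complex.exp_neg, Complex.real_smul]
    have hene : Complex.exp ((p.2 : ℂ) * Complex.I) ≠ 0 := Complex.exp_ne_zero _
    field_simp
  -- the θ-integral vanishes
  have hI₂ : ∫ p in B, Φ₂ p = 0 := by
    rw [hB, Measure.volume_eq_prod ℝ ℝ, setIntegral_prod _ (hB ▸ hIB₂)]
    have hinner : ∀ r ∈ Ioc (0 : ℝ) R, (fun r => ∫ θ in Ioo (-π) π, Φ₂ (r, θ)) r = 0 := by
      intro r hr0
      have hrne : (r : ℂ) ≠ 0 := by exact_mod_cast hr0.1.ne'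
      have hint : ∀ θ : ℝ, Φ₂ (r, θ)
          = (Complex.I * (r : ℂ)⁻¹) * (D ((r : ℂ) * E θ) ((r : ℂ) * (E θ * Complex.I))) := by
        intro θ
        simp only [hΦ₂]
        rw [show ((r : ℂ)) * (E θ * Complex.I) = r • (Complex.I * E θ) by
          rw [Complex.real_smul]; ring]
        rw [ContinuousLinearMap.map_smul, Complex.real_smul]
        field_simp
      have hFTC : ∫ θ in Ioo (-π) π, D ((r : ℂ) * E θ) ((r : ℂ) * (E θ * Complex.I))
          = g ((r : ℂ) * E π) - g ((r : ℂ) * E (-π)) := by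
        rw [← integral_Ioc_eq_integral_Ioo,
          ← intervalIntegral.integral_of_le (by linarith [Real.pi_pos])]
        apply intervalIntegral.integral_eq_sub_of_hasDerivAt (fun θ _ => hderivθ r θ)
        apply Continuous.intervalIntegrable
        exact (hDc.comp (by fun_prop)).clm_apply (by fun_prop)
      have hEpi : E π = -1 := by rw [hE]; exact Complex.exp_pi_mul_I
      have hEnpi : E (-π) = -1 := by
        rw [hE]
        simp only [Complex.ofReal_neg, neg_mul, Complex.exp_neg, Complex.exp_pi_mul_I]
        norm_num
      simp only
      calc ∫ θ in Ioo (-π) π, Φ₂ (r, θ)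
          = ∫ θ in Ioo (-π) π,
              (Complex.I * (r : ℂ)⁻¹) * (D ((r : ℂ) * E θ) ((r : ℂ) * (E θ * Complex.I))) := by
            simp_rw [hint]
        _ = (Complex.I * (r : ℂ)⁻¹) *
              ∫ θ in Ioo (-π) π, D ((r : ℂ) * E θ) ((r : ℂ) * (E θ * Complex.I)) :=
            integral_const_mul _ _
        _ = 0 := by rw [hFTC, hEpi, hEnpi, sub_self, mul_zero]
    rw [setIntegral_congr_fun measurableSet_Ioc hinner]
    simp
  -- the r-integral gives -2π g 0 after swapping
  have hmp : MeasurePreserving (Prod.swap : ℝ × ℝ → ℝ × ℝ) volume volume := by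
    rw [Measure.volume_eq_prod ℝ ℝ]
    exact Measure.measurePreserving_swap
  have hswap : ∫ p in B, Φ₁ p = ∫ p in Ioo (-π) π ×ˢ Ioc (0 : ℝ) R, Φ₁ (Prod.swap p) := by
    have hemb : MeasurableEmbedding (Prod.swap : ℝ × ℝ → ℝ × ℝ) :=
      MeasurableEquiv.prodComm.measurableEmbedding
    have := hmp.setIntegral_preimage_emb hemb Φ₁ B
    rw [hB, preimage_swap_prod] at this
    rw [hB, ← this]
  have hswint : IntegrableOn (fun p => Φ₁ (Prod.swap p)) (Ioo (-π) π ×ˢ Ioc (0 : ℝ) R) :=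
    ((hΦ₁c.comp continuous_swap).continuousOn.integrableOn_compact
      (isCompact_Icc.prod isCompact_Icc)).mono_set
      (prod_mono Ioo_subset_Icc_self Ioc_subset_Icc_self)
  have hI₁ : ∫ p in B, Φ₁ p = -(2 * π) * g 0 := by
    rw [hswap, Measure.volume_eq_prod ℝ ℝ, setIntegral_prod _ hswint]
    have hinner : ∀ θ ∈ Ioo (-π) π,
        (fun θ => ∫ r in Ioc (0 : ℝ) R, Φ₁ (Prod.swap (θ, r))) θ = -g 0 := by
      intro θ hθ
      simp only [Prod.swap_prod_mk]
      rw [← intervalIntegral.integral_of_le hR0.le]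
      rw [intervalIntegral.integral_eq_sub_of_hasDerivAt (fun t _ => hderivr θ t)
        (by apply Continuous.intervalIntegrable
            exact (hDc.comp (by fun_prop)).clm_apply (by fun_prop))]
      have h1 : g ((R : ℂ) * E θ) = 0 := by
        apply hgz
        rw [norm_mul, hEnorm, mul_one, Complex.norm_real, Real.norm_eq_abs,
          abs_of_pos hR0]
      have h2 : ((0 : ℝ) : ℂ) * E θ = 0 := by simp
      rw [h1, h2, zero_sub]
    rw [setIntegral_congr_fun measurableSet_Ioo hinner, setIntegral_const, Real.volume_real_Ioo_of_le (by linarith [Real.pi_pos])]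
    rw [show π - -π = 2 * π by ring, Complex.real_smul]
    push_cast
    ring
  calc ∫ w : ℂ, dbar g w / w
      = ∫ p in T, (Φ₁ p + Φ₂ p) := hpolar
    _ = (∫ p in T, Φ₁ p) + ∫ p in T, Φ₂ p := integral_add hIT₁ hIT₂
    _ = (∫ p in B, Φ₁ p) + ∫ p in B, Φ₂ p := by rw [hTB _ hΦ₁z, hTB _ hΦ₂z]
    _ = -(2 * π) * g 0 := by rw [hI₁, hI₂, add_zero]

theorem pompeiu (g : ℂ → ℂ) (hg : ContDiff ℝ 1 g) (hsupp : HasCompactSupport g) (z : ℂ) :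
    ∫ w : ℂ, dbar g w / (w - z) = -(2 * π) * g z := by
  have hgd : Differentiable ℝ g := hg.differentiable one_ne_zero
  have hG : ContDiff ℝ 1 (fun w => g (z + w)) := hg.comp (contDiff_const.add contDiff_id)
  have hGs : HasCompactSupport (fun w => g (z + w)) :=
    hsupp.comp_homeomorph (Homeomorph.addLeft z)
  have hdb : ∀ w, dbar (fun w => g (z + w)) w = dbar g (z + w) := by
    intro w
    have hin : HasFDerivAt (fun w : ℂ => z + w) (ContinuousLinearMap.id ℝ ℂ) w :=
      (hasFDerivAt_id w).const_add z
    have h1 : HasFDerivAt (fun w => g (z + w)) (fderiv ℝ g (z + w)) w := by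
      have := ((hgd (z + w)).hasFDerivAt).comp w hin
      rwa [ContinuousLinearMap.comp_id] at this
    simp only [dbar, h1.fderiv]
  calc ∫ w : ℂ, dbar g w / (w - z)
      = ∫ w : ℂ, dbar g (z + w) / (z + w - z) :=
        (integral_add_left_eq_self (μ := volume) z (f := fun w => dbar g w / (w - z))).symm
    _ = ∫ w : ℂ, dbar (fun w => g (z + w)) w / w := by
        simp_rw [hdb, add_sub_cancel_left]
    _ = -(2 * π) * g (z + 0) := pompeiu_zero _ hG hGs
    _ = -(2 * π) * g z := by rw [add_zero]

/-- **Runge's theorem.** Let `K ⊆ ℂ` be compact with `ℂ \ K` connected. Then for every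
function `f` holomorphic on an open neighborhood `U` of `K` there exists a sequence of
holomorphic polynomials converging uniformly on `K` to `f`. -/
theorem runge_theorem (K : Set ℂ) (hK : IsCompact K) (hconn : IsConnected Kᶜ)
    (f : ℂ → ℂ) (U : Set ℂ) (hU : IsOpen U) (hKU : K ⊆ U)
    (hf : DifferentiableOn ℂ f U) :
    ∃ p : ℕ → Polynomial ℂ,
      TendstoUniformlyOn (fun n z => (p n).eval z) f atTop K := by
  classical
  rcases K.eq_empty_or_nonempty with rfl | hne
  · exact ⟨fun _ => 0, tendstoUniformlyOn_empty⟩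
  have hCS : CompactSpace ↥K := isCompact_iff_compactSpace.mp hK
  -- bump function
  obtain ⟨V, hVopen, hKV, hVU, hVcomp⟩ := exists_open_between_and_isCompact_closure hK hU hKU
  obtain ⟨χ, hχ1, hχ0, hχ01⟩ := exists_contMDiffMap_one_nhds_of_subset_interior 𝓘(ℝ, ℂ) (n := ⊤)
    hK.isClosed (hKV.trans (interior_maximal subset_closure hVopen))
  have hχsm : ContDiff ℝ 1 (χ : ℂ → ℝ) := by
    have h := χ.contMDiff
    rw [contMDiff_iff_contDiff] at h
    exact h.of_le (by exact_mod_cast le_top)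
  obtain ⟨W₁, hW₁open, hKW₁, hχW₁⟩ := eventually_nhdsSet_iff_exists.mp hχ1
  set V₁ : Set ℂ := W₁ ∩ U with hV₁
  have hV₁open : IsOpen V₁ := hW₁open.inter hU
  have hKV₁ : K ⊆ V₁ := subset_inter hKW₁ hKU
  set g : ℂ → ℂ := fun w => χ w • f w with hg
  have hgf : ∀ w ∈ V₁, g w = f w := by
    intro w hw
    rw [hg]
    simp [hχW₁ w hw.1]
  have hg1 : ContDiff ℝ 1 g := by
    rw [contDiff_iff_contDiffAt]
    intro x
    by_cases hx : x ∈ U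
    · have hfx : ContDiffAt ℝ 1 f x := by
        have h1 : AnalyticAt ℂ f x := hf.analyticAt (hU.mem_nhds hx)
        exact (h1.contDiffAt.of_le le_top).restrict_scalars ℝ
      exact (hχsm.contDiffAt).smul hfx
    · have hx' : x ∈ (closure V)ᶜ := fun hc => hx (hVU hc)
      have hev : g =ᶠ[𝓝 x] fun _ => (0 : ℂ) := by
        filter_upwards [(isOpen_compl_iff.mpr isClosed_closure).mem_nhds hx'] with w hw
        rw [hg]
        simp [hχ0 w hw]
      exact contDiffAt_const.congr_of_eventuallyEq hev
  have hgs : HasCompactSupport g := by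
    apply HasCompactSupport.intro hVcomp
    intro x hx
    rw [hg]
    simp [hχ0 x hx]
  -- dbar g vanishes near K
  have hdbar0 : ∀ x ∈ V₁, dbar g x = 0 := by
    intro x hx
    have hev : g =ᶠ[𝓝 x] f := by
      filter_upwards [hV₁open.mem_nhds hx] with w hw using hgf w hw
    have hfx : DifferentiableAt ℂ f x := hf.differentiableAt (hU.mem_nhds hx.2)
    have hfd : fderiv ℝ g x = (fderiv ℂ f x).restrictScalars ℝ := by
      rw [hev.fderiv_eq]
      exact (hfx.hasFDerivAt.restrictScalars ℝ).fderiv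
    have h2 : fderiv ℂ f x Complex.I = Complex.I * fderiv ℂ f x 1 := by
      have h3 := (fderiv ℂ f x).map_smul Complex.I (1 : ℂ)
      simpa [smul_eq_mul] using h3
    simp only [dbar, hfd, ContinuousLinearMap.coe_restrictScalars']
    rw [h2]
    linear_combination (fderiv ℂ f x 1) * Complex.I_sq
  set q : ℂ → ℂ := dbar g with hq
  have hDc : Continuous (fderiv ℝ g) := hg1.continuous_fderiv one_ne_zero
  have hqc : Continuous q := by
    rw [hq]
    exact (hDc.clm_apply continuous_const).add
      (continuous_const.mul (hDc.clm_apply continuous_const))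
  have hqK : ∀ x ∈ V₁, q x = 0 := hdbar0
  have hqs : HasCompactSupport q := by
    apply HasCompactSupport.intro hgs
    intro x hx
    have h0 : fderiv ℝ g x = 0 := by
      by_contra h
      exact hx (support_fderiv_subset (𝕜 := ℝ) h)
    rw [hq]
    simp [dbar, h0]
  -- the family of pole functions
  set Φ : ℂ → C(K, ℂ) := fun w => if hw : w ∈ K then 0 else q w • pole K w hw with hΦ
  have hΦ0 : ∀ w, q w = 0 → Φ w = 0 := by
    intro w h
    simp only [hΦ]
    split_ifs with hw
    · rfl
    · simp [h]
  have hΦap : ∀ (w : ℂ) (z : K), Φ w z = q w / (w - (z : ℂ)) := by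
    intro w z
    simp only [hΦ]
    split_ifs with hw
    · simp [hqK w (hKV₁ hw)]
    · simp [pole_apply, div_eq_mul_inv]
  have hΦcont : Continuous Φ := by
    rw [continuous_iff_continuousAt]
    intro x
    by_cases hx : x ∈ V₁
    · have hev : Φ =ᶠ[𝓝 x] fun _ => (0 : C(K, ℂ)) := by
        filter_upwards [hV₁open.mem_nhds hx] with w hw using hΦ0 w (hqK w hw)
      exact ContinuousAt.congr continuousAt_const hev.symm
    · have hxK : x ∉ K := fun h => hx (hKV₁ h)
      have hco : ContinuousOn Φ Kᶜ := by
        rw [continuousOn_iff_continuous_restrict]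
        have heq : (Kᶜ).restrict Φ = fun w : ↥(Kᶜ) => q (w : ℂ) • pole K (w : ℂ) w.2 := by
          funext w
          simp only [restrict_apply, hΦ, dif_neg (w.2 : (w : ℂ) ∈ Kᶜ)]
          exact dif_neg w.2
        rw [show (Kᶜ).domRestrict Φ = (Kᶜ).restrict Φ from rfl, heq]
        exact (hqc.comp continuous_subtype_val).smul continuous_pole
      exact (hco x hxK).continuousAt ((hK.isClosed.isOpen_compl).mem_nhds hxK)
  have hΦsupp : HasCompactSupport Φ := by
    apply HasCompactSupport.intro hqs
    intro x hx
    exact hΦ0 x (image_eq_zero_of_notMem_tsupport hx)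
  have hΦint : Integrable Φ volume := hΦcont.integrable_of_hasCompactSupport hΦsupp
  have hΦmem : ∀ w, Φ w ∈ polyAlg K := by
    intro w
    simp only [hΦ]
    split_ifs with hw
    · exact zero_mem _
    · exact Subalgebra.smul_mem _ (pole_mem hK hne hconn hw) _
  -- convexity and average
  have hconv : Convex ℝ ((polyAlg K : Subalgebra ℂ C(K, ℂ)) : Set C(K, ℂ)) := by
    intro x hx y hy a b _ _ _
    exact add_mem (real_smul_mem hx a) (real_smul_mem hy b)
  obtain ⟨ρ, hρ⟩ := hqs.isBounded.subset_closedBall 0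
  set t : Set ℂ := closedBall 0 (max ρ 1) with ht
  have hst : tsupport q ⊆ t := hρ.trans (closedBall_subset_closedBall (le_max_left _ _))
  have ht0 : volume t ≠ 0 := by
    rw [ht]
    exact (measure_closedBall_pos volume 0 (by positivity)).ne'
  have htfin : volume t ≠ ⊤ := (isCompact_closedBall _ _).measure_lt_top.ne
  have havg : ⨍ w in t, Φ w ∈ (polyAlg K : Set C(K, ℂ)) :=
    hconv.set_average_mem isClosed_polyAlg ht0 htfin
      (ae_of_all _ fun w => hΦmem w) hΦint.integrableOn
  have hint_mem : (∫ w, Φ w) ∈ polyAlg K := by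
    have h1 : ∫ w in t, Φ w = ∫ w, Φ w :=
      setIntegral_eq_integral_of_forall_compl_eq_zero
        (fun w hw => hΦ0 w (image_eq_zero_of_notMem_tsupport fun hc => hw (hst hc)))
    have h2 : ⨍ w in t, Φ w = (volume t).toReal⁻¹ • ∫ w in t, Φ w := by
      rw [setAverage_eq]; rfl
    have h3 : (∫ w, Φ w) = (volume t).toReal • ⨍ w in t, Φ w := by
      rw [h2, h1, smul_smul, mul_inv_cancel₀, one_smul]
      exact ENNReal.toReal_ne_zero.mpr ⟨ht0, htfin⟩
    rw [h3]
    exact real_smul_mem havg _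
  -- f restricted to K
  have hfc : Continuous fun z : K => f (z : ℂ) :=
    hf.continuousOn.comp_continuous continuous_subtype_val fun z => hKU z.2
  set fK : C(K, ℂ) := ⟨fun z => f (z : ℂ), hfc⟩ with hfKdef
  have hπ : ((-(2 * π) : ℝ) : ℂ) ≠ 0 := by
    simp [Real.pi_ne_zero]
  have hfKeq : fK = ((-(2 * π) : ℝ) : ℂ)⁻¹ • ∫ w, Φ w := by
    ext z
    rw [ContinuousMap.smul_apply, ContinuousMap.integral_apply hΦint]
    rw [show (∫ w, Φ w z) = ∫ w, q w / (w - (z : ℂ)) by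
      exact integral_congr_ae (ae_of_all _ fun w => hΦap w z)]
    rw [hq, pompeiu g hg1 hgs (z : ℂ), hgf (z : ℂ) (hKV₁ z.2)]
    have : fK z = f (z : ℂ) := rfl
    rw [this]
    rw [smul_eq_mul]
    have h2π : (2 * (π : ℂ)) ≠ 0 := by
      simp [Real.pi_ne_zero]
    push_cast
    field_simp
  have hfKmem : fK ∈ polyAlg K := by
    rw [hfKeq]
    exact Subalgebra.smul_mem _ hint_mem _
  -- extract the sequence
  have hcl : fK ∈ closure ((Algebra.adjoin ℂ {iota K} : Subalgebra ℂ C(K, ℂ)) : Set C(K, ℂ)) := by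
    have h := hfKmem
    rw [← SetLike.mem_coe, polyAlg, Subalgebra.topologicalClosure_coe] at h
    exact h
  obtain ⟨u, hu_mem, hu_lim⟩ := mem_closure_iff_seq_limit.mp hcl
  have hpoly : ∀ n, ∃ p : Polynomial ℂ, polyRes K p = u n := by
    intro n
    have h := hu_mem n
    rw [SetLike.mem_coe, Algebra.adjoin_singleton_eq_range_aeval] at h
    obtain ⟨p, hp⟩ := h
    exact ⟨p, by rw [polyRes_eq_aeval]; exact hp⟩
  choose p hp using hpoly
  refine ⟨p, ?_⟩
  rw [Metric.tendstoUniformlyOn_iff]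
  intro ε hε
  filter_upwards [Metric.tendsto_nhds.mp hu_lim ε hε] with n hn z hz
  have heq : dist (f z) ((p n).eval z) = dist (fK ⟨z, hz⟩) (u n ⟨z, hz⟩) := by
    rw [← hp n]
    rfl
  rw [heq]
  exact lt_of_le_of_lt (ContinuousMap.dist_apply_le_dist _) (by rwa [dist_comm] at hn)
end

section
/- Let f be continuous on the closed unit disk 𝔻̄ = {z ∈ ℂ : |z| ≤ 1} and let R > 1. Then limsup_{n→∞} d_n(f,𝔻̄)^{1/n} ≤ 1/R if and only if f is the restriction to 𝔻̄ of a function holomorphic in the disk {z ∈ ℂ : |z| < R}. -/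
open Filter Metric Polynomial Topology

/-- The supremum norm `‖g‖_K = sup_{z ∈ K} |g z|` for `K ⊆ ℂ`. -/
noncomputable def supC (K : Set ℂ) (g : ℂ → ℂ) : ℝ :=
  ⨆ z : K, ‖g z‖

/-- `d_n(f,K)`: distance from `f` to the holomorphic polynomials of degree at most `n`
in the supremum norm on `K`. -/
noncomputable def dnApprox (K : Set ℂ) (f : ℂ → ℂ) (n : ℕ) : ℝ :=
  ⨅ p : {p : Polynomial ℂ // p.natDegree ≤ n}, supC K (fun z => f z - p.1.eval z)

private lemma supC_nonneg (K : Set ℂ) (g : ℂ → ℂ) : 0 ≤ supC K g :=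
  Real.iSup_nonneg fun _ => norm_nonneg _

private lemma supC_le {K : Set ℂ} {g : ℂ → ℂ} {M : ℝ} (hM : 0 ≤ M)
    (h : ∀ z ∈ K, ‖g z‖ ≤ M) : supC K g ≤ M :=
  Real.iSup_le (fun z => h z z.2) hM

private lemma abs_le_supC {K : Set ℂ} (hK : IsCompact K) {g : ℂ → ℂ}
    (hg : ContinuousOn g K) {z : ℂ} (hz : z ∈ K) : ‖g z‖ ≤ supC K g := by
  have hbdd : BddAbove (Set.range fun w : K => ‖g w‖) := by
    have h2 := (hK.image_of_continuousOn (continuous_norm.comp_continuousOn hg)).bddAbove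
    rwa [Set.image_eq_range] at h2
  exact le_ciSup hbdd ⟨z, hz⟩

instance dnaux_nonempty (n : ℕ) : Nonempty {p : Polynomial ℂ // p.natDegree ≤ n} :=
  ⟨⟨0, by simp⟩⟩

private lemma dnApprox_nonneg (K : Set ℂ) (f : ℂ → ℂ) (n : ℕ) : 0 ≤ dnApprox K f n :=
  le_ciInf fun _ => supC_nonneg _ _

private lemma dnApprox_le (K : Set ℂ) (f : ℂ → ℂ) {n : ℕ} {p : Polynomial ℂ}
    (hp : p.natDegree ≤ n) : dnApprox K f n ≤ supC K fun z => f z - p.eval z := by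
  have hbd : BddBelow (Set.range fun p : {p : Polynomial ℂ // p.natDegree ≤ n} =>
      supC K fun z => f z - p.1.eval z) := ⟨0, by rintro x ⟨q, rfl⟩; exact supC_nonneg _ _⟩
  exact ciInf_le hbd ⟨p, hp⟩

/-- Cauchy estimate: the coefficients of a polynomial are bounded by its sup on the
unit circle. -/
private lemma coeff_abs_le {q : Polynomial ℂ} {M : ℝ}
    (h : ∀ z ∈ sphere (0 : ℂ) 1, ‖q.eval z‖ ≤ M) (k : ℕ) :
    ‖q.coeff k‖ ≤ M := by
  set p : FormalMultilinearSeries ℂ ℂ ℂ :=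
    FormalMultilinearSeries.ofScalars ℂ (fun n => q.coeff n) with hpdef
  have hpz : ∀ᶠ n in atTop, p n = 0 := by
    filter_upwards [eventually_gt_atTop q.natDegree] with n hn
    exact FormalMultilinearSeries.ofScalars_eq_zero_of_scalar_zero ℂ
      (q.coeff_eq_zero_of_natDegree_lt hn)
  have hrad : p.radius = ⊤ := p.radius_eq_top_of_eventually_eq_zero hpz
  have happ : ∀ (n : ℕ) (y : ℂ), (p n fun _ => y) = q.coeff n * y ^ n := by
    intro n y
    rw [hpdef, FormalMultilinearSeries.ofScalars_apply_eq, smul_eq_mul]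
  have hsum : ∀ y : ℂ, HasSum (fun n => p n fun _ => y) (q.eval y) := by
    intro y
    have he : q.eval y = ∑ i ∈ Finset.range (q.natDegree + 1), (fun n => p n fun _ => y) i := by
      rw [Polynomial.eval_eq_sum_range]
      exact Finset.sum_congr rfl fun i _ => (happ i y).symm
    rw [he]
    refine hasSum_sum_of_ne_finset_zero fun b hb => ?_
    have hb' : q.natDegree < b := by
      by_contra hcon
      exact hb (Finset.mem_range.2 (by omega))
    rw [happ, q.coeff_eq_zero_of_natDegree_lt hb', zero_mul]
  have h1 : HasFPowerSeriesOnBall (fun y => q.eval y) p 0 ⊤ :=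
    ⟨by rw [hrad], by simp, fun {y} _ => by simpa using hsum y⟩
  have h2 : HasFPowerSeriesOnBall (fun y => q.eval y) (cauchyPowerSeries (fun y => q.eval y) 0 1)
      0 1 := by
    have hd : DifferentiableOn ℂ (fun y => q.eval y) (closedBall (0:ℂ) ((1:NNReal):ℝ)) :=
      (q.differentiable).differentiableOn
    simpa using hd.hasFPowerSeriesOnBall one_pos
  have heq : p = cauchyPowerSeries (fun y => q.eval y) 0 1 :=
    h1.hasFPowerSeriesAt.eq_formalMultilinearSeries h2.hasFPowerSeriesAt
  have hM0 : 0 ≤ M := le_trans (norm_nonneg _) (h 1 (by simp))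
  have hcont : Continuous fun θ : ℝ => ‖q.eval (circleMap 0 1 θ)‖ :=
    ((q.continuous).comp (continuous_circleMap 0 1)).norm
  have hint : (∫ θ in (0:ℝ)..(2*Real.pi), ‖q.eval (circleMap 0 1 θ)‖) ≤ 2 * Real.pi * M := by
    have hmono := intervalIntegral.integral_mono_on (μ := MeasureTheory.volume)
      (by positivity : (0:ℝ) ≤ 2*Real.pi)
      (hcont.intervalIntegrable _ _) intervalIntegrable_const
      (fun θ _ => by
        exact h _ (circleMap_mem_sphere 0 zero_le_one θ))
    simpa using hmono
  have hkey := norm_cauchyPowerSeries_le (fun y => q.eval y) 0 1 k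
  have hnorm : ‖p k‖ ≤ M := by
    rw [heq]
    refine hkey.trans ?_
    have h2pi : (0:ℝ) < 2 * Real.pi := by positivity
    calc ((2 * Real.pi)⁻¹ * ∫ θ in (0:ℝ)..(2*Real.pi), ‖q.eval (circleMap 0 1 θ)‖) * |(1:ℝ)|⁻¹ ^ k
        = (2 * Real.pi)⁻¹ * ∫ θ in (0:ℝ)..(2*Real.pi), ‖q.eval (circleMap 0 1 θ)‖ := by simp
      _ ≤ (2 * Real.pi)⁻¹ * (2 * Real.pi * M) := by
          exact mul_le_mul_of_nonneg_left hint (by positivity)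
      _ = M := by field_simp
  have hck : p.coeff k = q.coeff k := by
    have h3 : p.coeff k = p k fun _ => 1 := rfl
    rw [h3, happ, one_pow, mul_one]
  calc ‖q.coeff k‖ = ‖p.coeff k‖ := by rw [hck]
    _ = ‖p k‖ := FormalMultilinearSeries.norm_apply_eq_norm_coef.symm
    _ ≤ M := hnorm

/-- Growth bound for a polynomial on a disk of radius `ρ ≥ 1` given coefficient bounds. -/
private lemma poly_eval_bound {q : Polynomial ℂ} {m : ℕ} (hq : q.natDegree ≤ m) {M ρ : ℝ}
    (hM : ∀ k, ‖q.coeff k‖ ≤ M) (hρ : 1 ≤ ρ) {z : ℂ} (hz : ‖z‖ ≤ ρ) :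
    ‖q.eval z‖ ≤ ((m : ℝ) + 1) * M * ρ ^ m := by
  have hM0 : 0 ≤ M := le_trans (norm_nonneg _) (hM 0)
  have hρ0 : (0:ℝ) ≤ ρ := le_trans zero_le_one hρ
  rw [Polynomial.eval_eq_sum_range' (Nat.lt_succ_of_le hq)]
  calc ‖∑ i ∈ Finset.range (m+1), q.coeff i * z ^ i‖
      ≤ ∑ i ∈ Finset.range (m+1), ‖q.coeff i * z ^ i‖ :=
        norm_sum_le _ _
    _ ≤ ∑ _i ∈ Finset.range (m+1), M * ρ ^ m := by
        refine Finset.sum_le_sum fun i hi => ?_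
        rw [norm_mul, norm_pow]
        have h1 : ‖z‖ ^ i ≤ ρ ^ m := by
          calc ‖z‖ ^ i ≤ ρ ^ i :=
                pow_le_pow_left₀ (norm_nonneg _) hz i
            _ ≤ ρ ^ m := pow_le_pow_right₀ hρ (Nat.lt_succ_iff.1 (Finset.mem_range.1 hi))
        exact mul_le_mul (hM i) h1 (by positivity) hM0
    _ = ((m : ℝ) + 1) * M * ρ ^ m := by
        rw [Finset.sum_const, Finset.card_range, nsmul_eq_mul]
        push_cast; ring

/-- If `f` extends holomorphically to a ball of radius `R > ρ > 1`, then `d_n` decays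
like `ρ⁻ⁿ`. -/
private lemma dn_geom_bound {f F : ℂ → ℂ} {R : ℝ}
    (hF : DifferentiableOn ℂ F (ball (0:ℂ) R))
    (hFf : Set.EqOn F f (closedBall (0:ℂ) 1)) {ρ : ℝ} (h1 : 1 < ρ) (h2 : ρ < R) :
    ∃ D > 0, ∀ n, dnApprox (closedBall (0:ℂ) 1) f n ≤ D * ρ⁻¹ ^ n := by
  have hρ0 : (0:ℝ) < ρ := lt_trans one_pos h1
  set ρ' : ℝ := (ρ + R)/2 with hρ'def
  have hρρ' : ρ < ρ' := by rw [hρ'def]; linarith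
  have hρ'R : ρ' < R := by rw [hρ'def]; linarith
  have hρ'0 : (0:ℝ) < ρ' := lt_trans hρ0 hρρ'
  set R' : NNReal := Real.toNNReal ρ' with hR'def
  have hR'coe : (R' : ℝ) = ρ' := Real.coe_toNNReal _ hρ'0.le
  have hdiff : DifferentiableOn ℂ F (closedBall (0:ℂ) (R' : ℝ)) := by
    rw [hR'coe]
    exact hF.mono (closedBall_subset_ball hρ'R)
  have hps : HasFPowerSeriesOnBall F (cauchyPowerSeries F 0 (R' : ℝ)) 0 (R' : ENNReal) :=
    hdiff.hasFPowerSeriesOnBall (by simpa [hR'def] using Real.toNNReal_pos.2 hρ'0)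
  set p := cauchyPowerSeries F 0 (R' : ℝ) with hpdef
  have hlt : ((Real.toNNReal ρ : NNReal) : ENNReal) < p.radius := by
    refine lt_of_lt_of_le ?_ hps.r_le
    rw [ENNReal.coe_lt_coe]
    exact (Real.toNNReal_lt_toNNReal_iff hρ'0).2 hρρ'
  obtain ⟨C, hC, hCb⟩ := p.norm_mul_pow_le_of_lt_radius hlt
  have hρcoe : ((Real.toNNReal ρ : NNReal) : ℝ) = ρ := Real.coe_toNNReal _ hρ0.le
  have hcoeff : ∀ m : ℕ, ‖p.coeff m‖ ≤ C * ρ⁻¹ ^ m := by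
    intro m
    have hb := hCb m
    rw [hρcoe, FormalMultilinearSeries.norm_apply_eq_norm_coef] at hb
    rw [inv_pow, mul_comm C, ← div_eq_inv_mul, le_div_iff₀ (by positivity)]
    linarith [hb]
  set P : ℕ → Polynomial ℂ :=
    fun n => ∑ k ∈ Finset.range (n+1), Polynomial.C (p.coeff k) * Polynomial.X ^ k with hPdef
  have hPdeg : ∀ n, (P n).natDegree ≤ n := by
    intro n
    refine natDegree_sum_le_of_forall_le _ _ fun i hi => ?_
    calc (Polynomial.C (p.coeff i) * Polynomial.X ^ i).natDegree
        ≤ (Polynomial.C (p.coeff i)).natDegree + (Polynomial.X ^ i : Polynomial ℂ).natDegree :=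
          natDegree_mul_le
      _ ≤ i := by simp [Polynomial.natDegree_X_pow]
      _ ≤ n := Nat.lt_succ_iff.1 (Finset.mem_range.1 hi)
  have hPeval : ∀ (n : ℕ) (z : ℂ),
      (P n).eval z = ∑ k ∈ Finset.range (n+1), p.coeff k * z ^ k := by
    intro n z; simp [hPdef, Polynomial.eval_finset_sum]
  have hinv0 : (0:ℝ) < ρ⁻¹ := by positivity
  have hinv1 : ρ⁻¹ < 1 := inv_lt_one_of_one_lt₀ h1
  set D : ℝ := C * (1 - ρ⁻¹)⁻¹ * ρ⁻¹ with hDdef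
  have hD : 0 < D := by
    have : 0 < 1 - ρ⁻¹ := by linarith
    positivity
  refine ⟨D, hD, fun n => ?_⟩
  refine le_trans (dnApprox_le _ _ (hPdeg n)) (supC_le (by positivity) ?_)
  intro z hz
  have hz1 : ‖z‖ ≤ 1 := by
    simpa [Complex.dist_eq] using (mem_closedBall.1 hz)
  have hzball : z ∈ Metric.eball (0:ℂ) (R' : ENNReal) := by
    rw [Metric.eball_coe, mem_ball, Complex.dist_eq, hR'coe, sub_zero]
    exact lt_of_le_of_lt hz1 (lt_trans h1 hρρ')
  have hsum : HasSum (fun k : ℕ => p.coeff k * z ^ k) (F z) := by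
    have h4 := hps.hasSum hzball
    rw [zero_add] at h4
    refine h4.congr_fun fun k => ?_
    rw [FormalMultilinearSeries.apply_eq_pow_smul_coeff, smul_eq_mul, mul_comm]
  have hsmm := hsum.summable
  have htail : f z - (P n).eval z = ∑' k : ℕ, p.coeff (k + (n+1)) * z ^ (k + (n+1)) := by
    have h0 := Summable.sum_add_tsum_nat_add (f := fun k : ℕ => p.coeff k * z ^ k) (n+1) hsmm
    rw [hPeval, ← hFf hz, ← hsum.tsum_eq]
    linear_combination -h0
  have hbd : ∀ k : ℕ, ‖p.coeff (k+(n+1)) * z ^ (k+(n+1))‖ ≤ C * ρ⁻¹ ^ (n+1) * ρ⁻¹ ^ k := by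
    intro k
    rw [norm_mul, norm_pow]
    have ha1 : ‖p.coeff (k+(n+1))‖ ≤ C * ρ⁻¹ ^ (k+(n+1)) := hcoeff _
    have ha2 : ‖z‖ ^ (k+(n+1)) ≤ 1 :=
      pow_le_one₀ (norm_nonneg z) (by exact hz1)
    calc ‖p.coeff (k+(n+1))‖ * ‖z‖ ^ (k+(n+1))
        ≤ (C * ρ⁻¹ ^ (k+(n+1))) * 1 :=
          mul_le_mul ha1 ha2 (by positivity) (le_trans (norm_nonneg _) ha1)
      _ = C * ρ⁻¹ ^ (n+1) * ρ⁻¹ ^ k := by rw [pow_add]; ring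
  have hgs : HasSum (fun k : ℕ => C * ρ⁻¹ ^ (n+1) * ρ⁻¹ ^ k)
      (C * ρ⁻¹ ^ (n+1) * (1 - ρ⁻¹)⁻¹) :=
    (hasSum_geometric_of_lt_one hinv0.le hinv1).mul_left _
  have hfinal := tsum_of_norm_bounded hgs hbd
  rw [← htail] at hfinal
  calc ‖f z - (P n).eval z‖ = ‖f z - (P n).eval z‖ := rfl
    _ ≤ C * ρ⁻¹ ^ (n+1) * (1 - ρ⁻¹)⁻¹ := hfinal
    _ = D * ρ⁻¹ ^ n := by rw [hDdef, pow_succ]; ring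

/-- From a geometric bound `d n ≤ D * t ^ n` we get `limsup dₙ^{1/n} ≤ t`. -/
private lemma limsup_rpow_le {d : ℕ → ℝ} (hd : ∀ n, 0 ≤ d n) {D t : ℝ} (hD : 0 < D)
    (ht : 0 < t) (hb : ∀ n, d n ≤ D * t ^ n) :
    limsup (fun n : ℕ => d n ^ ((n:ℝ)⁻¹)) atTop ≤ t := by
  have hu0 : ∀ n : ℕ, 0 ≤ d n ^ ((n:ℝ)⁻¹) := fun n => Real.rpow_nonneg (hd n) _
  have h1 : Tendsto (fun n : ℕ => D ^ ((n:ℝ)⁻¹)) atTop (𝓝 1) := by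
    have h2 : Tendsto (fun n : ℕ => Real.log D * (n:ℝ)⁻¹) atTop (𝓝 0) := by
      simpa using tendsto_inv_atTop_nhds_zero_nat.const_mul (Real.log D)
    have h3 := (Real.continuous_exp.tendsto 0).comp h2
    rw [Real.exp_zero] at h3
    refine h3.congr fun n => ?_
    rw [Function.comp_apply, Real.rpow_def_of_pos hD]
  have hyt : Tendsto (fun n : ℕ => D ^ ((n:ℝ)⁻¹) * t) atTop (𝓝 t) := by
    simpa using h1.mul_const t
  have hle : (fun n : ℕ => d n ^ ((n:ℝ)⁻¹)) ≤ᶠ[atTop] fun n : ℕ => D ^ ((n:ℝ)⁻¹) * t := by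
    filter_upwards [eventually_ge_atTop 1] with n hn
    have hne : ((n:ℝ)) ≠ 0 := Nat.cast_ne_zero.2 (by omega)
    have h4 : d n ^ ((n:ℝ)⁻¹) ≤ (D * t ^ n) ^ ((n:ℝ)⁻¹) :=
      Real.rpow_le_rpow (hd n) (hb n) (by positivity)
    refine h4.trans_eq ?_
    rw [Real.mul_rpow hD.le (by positivity), ← Real.rpow_natCast t n, ← Real.rpow_mul ht.le,
      mul_inv_cancel₀ hne, Real.rpow_one]
  calc limsup (fun n : ℕ => d n ^ ((n:ℝ)⁻¹)) atTop
      ≤ limsup (fun n : ℕ => D ^ ((n:ℝ)⁻¹) * t) atTop := by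
        refine limsup_le_limsup hle ?_ ?_
        · exact (isBoundedUnder_of ⟨0, fun n => hu0 n⟩ :
            IsBoundedUnder (· ≥ ·) atTop _).isCoboundedUnder_le
        · exact hyt.isBoundedUnder_le
    _ = t := hyt.limsup_eq

/-- Let `f` be continuous on the closed unit disk `𝔻̄` and `R > 1`. Then
`limsup_{n→∞} d_n(f,𝔻̄)^{1/n} ≤ 1/R` if and only if `f` is the restriction to `𝔻̄` of a
function holomorphic in the disk of radius `R`. -/
theorem bernstein_walsh_disk (f : ℂ → ℂ)
    (hf : ContinuousOn f (Metric.closedBall (0 : ℂ) 1)) (R : ℝ) (hR : 1 < R) :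
    limsup (fun n : ℕ => dnApprox (Metric.closedBall (0 : ℂ) 1) f n ^ ((n : ℝ)⁻¹)) atTop ≤ 1 / R
    ↔ ∃ F : ℂ → ℂ, DifferentiableOn ℂ F (Metric.ball (0 : ℂ) R) ∧
        Set.EqOn F f (Metric.closedBall (0 : ℂ) 1) := by
  have hRpos : (0:ℝ) < R := lt_trans one_pos hR
  have hRinv0 : (0:ℝ) < R⁻¹ := by positivity
  have hRinv1 : R⁻¹ < 1 := inv_lt_one_of_one_lt₀ hR
  constructor
  · -- forward: good approximation ⟹ holomorphic extension
    intro hlim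
    set K := Metric.closedBall (0:ℂ) 1 with hKdef
    set d := dnApprox K f with hddef
    -- choose near-optimal polynomials
    have hchoice : ∀ n : ℕ, ∃ p : Polynomial ℂ, p.natDegree ≤ n ∧
        supC K (fun z => f z - p.eval z) < d n + R⁻¹ ^ n := by
      intro n
      have hlt : d n < d n + R⁻¹ ^ n := lt_add_of_pos_right _ (by positivity)
      obtain ⟨⟨p, hp⟩, hp2⟩ := exists_lt_of_ciInf_lt hlt
      exact ⟨p, hp, hp2⟩
    choose P hPdeg hPb using hchoice
    set b := fun n => supC K (fun z => f z - (P n).eval z) with hbdef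
    have hb0 : ∀ n, 0 ≤ b n := fun n => supC_nonneg _ _
    have hpoint : ∀ n, ∀ z ∈ K, ‖f z - (P n).eval z‖ ≤ b n := fun n z hz =>
      abs_le_supC (isCompact_closedBall _ _)
        (hf.sub ((P n).continuous).continuousOn) hz
    -- boundedness of the rpow sequence
    have hbound_u : ∀ n : ℕ, d n ^ ((n:ℝ)⁻¹) ≤ max 1 (supC K f) := by
      intro n
      have hdle : d n ≤ supC K f := by
        have h5 := dnApprox_le K f (n := n) (p := 0) (by simp)
        simpa using h5
      rcases Nat.eq_zero_or_pos n with h | h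
      · subst h; simpa using le_max_left 1 (supC K f)
      · rcases le_or_gt (supC K f) 1 with hM | hM
        · exact le_trans (Real.rpow_le_one (dnApprox_nonneg _ _ _) (le_trans hdle hM)
            (by positivity)) (le_max_left _ _)
        · have h6 : d n ^ ((n:ℝ)⁻¹) ≤ (supC K f) ^ ((n:ℝ)⁻¹) :=
            Real.rpow_le_rpow (dnApprox_nonneg _ _ _) hdle (by positivity)
          have h7 : (supC K f) ^ ((n:ℝ)⁻¹) ≤ (supC K f) ^ (1:ℝ) := by
            refine Real.rpow_le_rpow_of_exponent_le hM.le ?_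
            rw [inv_le_one_iff₀]
            right; exact_mod_cast h
          rw [Real.rpow_one] at h7
          exact le_trans h6 (h7.trans (le_max_right _ _))
    have hbdd : IsBoundedUnder (· ≤ ·) atTop (fun n : ℕ => d n ^ ((n:ℝ)⁻¹)) :=
      isBoundedUnder_of ⟨max 1 (supC K f), hbound_u⟩
    -- eventual geometric bound on the errors
    have hbev : ∀ r : ℝ, R⁻¹ < r → r < 1 → ∀ᶠ n in atTop, b n < 2 * r ^ n := by
      intro r hr1 hr2
      have h5 : limsup (fun n : ℕ => d n ^ ((n:ℝ)⁻¹)) atTop < r :=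
        lt_of_le_of_lt hlim (by rwa [one_div])
      filter_upwards [eventually_lt_of_limsup_lt h5 hbdd, eventually_ge_atTop 1] with n hn hn1
      have hne : ((n:ℝ)) ≠ 0 := Nat.cast_ne_zero.2 (by omega)
      have hdn : d n < r ^ n := by
        have h6 : d n = (d n ^ ((n:ℝ)⁻¹)) ^ n := by
          rw [← Real.rpow_natCast (d n ^ ((n:ℝ)⁻¹)) n, ← Real.rpow_mul (dnApprox_nonneg _ _ _),
            inv_mul_cancel₀ hne, Real.rpow_one]
        rw [h6]
        exact pow_lt_pow_left₀ hn (Real.rpow_nonneg (dnApprox_nonneg _ _ _) _) (by omega)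
      have h7 : R⁻¹ ^ n ≤ r ^ n := pow_le_pow_left₀ hRinv0.le hr1.le n
      calc b n < d n + R⁻¹ ^ n := hPb n
        _ < r ^ n + r ^ n := add_lt_add_of_lt_of_le hdn h7
        _ = 2 * r ^ n := by ring
    -- coefficient bounds for the differences
    set c := fun n => b n + b (n+1) with hcdef
    have hc0 : ∀ n, 0 ≤ c n := fun n => add_nonneg (hb0 _) (hb0 _)
    have hqcoeff : ∀ n k, ‖(P (n+1) - P n).coeff k‖ ≤ c n := by
      intro n k
      refine coeff_abs_le (fun z hz => ?_) k
      have hzK : z ∈ K := sphere_subset_closedBall hz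
      have he : (P (n+1) - P n).eval z
          = (f z - (P n).eval z) - (f z - (P (n+1)).eval z) := by
        rw [Polynomial.eval_sub]; ring
      rw [he]
      calc ‖(f z - (P n).eval z) - (f z - (P (n+1)).eval z)‖
          ≤ ‖f z - (P n).eval z‖ + ‖f z - (P (n+1)).eval z‖ := by
            exact
              norm_sub_le (f z - (P n).eval z) (f z - (P (n+1)).eval z)
        _ ≤ b n + b (n+1) := add_le_add (hpoint n z hzK) (hpoint (n+1) z hzK)
    -- uniform summable bounds on disks of radius ρ < R
    have key : ∀ ρ : ℝ, 1 ≤ ρ → ρ < R → ∃ u : ℕ → ℝ, Summable u ∧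
        ∀ (n : ℕ) (z : ℂ), ‖z‖ ≤ ρ →
          ‖(P (n+1)).eval z - (P n).eval z‖ ≤ u n := by
      intro ρ hρ1 hρR
      have hρ0 : (0:ℝ) < ρ := lt_of_lt_of_le one_pos hρ1
      refine ⟨fun n => ((n:ℝ) + 2) * c n * ρ ^ (n+1), ?_, ?_⟩
      · -- summability
        obtain ⟨r, hr1, hr2⟩ := exists_between (inv_strictAnti₀ hρ0 hρR)
        have hr0 : 0 < r := lt_trans hRinv0 hr1
        have hrρ : r * ρ < 1 := by
          have h8 := mul_lt_mul_of_pos_right hr2 hρ0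
          rwa [inv_mul_cancel₀ hρ0.ne'] at h8
        have hr_lt1 : r < 1 := lt_of_lt_of_le hr2 (inv_le_one_of_one_le₀ hρ1)
        have hbase : Summable (fun n : ℕ => ((n:ℝ) + 2) * (r*ρ)^n) := by
          have h9 := summable_pow_mul_geometric_of_norm_lt_one 1 (r := r*ρ)
            (by rw [Real.norm_eq_abs, abs_of_nonneg (by positivity)]; exact hrρ)
          have h10 := (summable_geometric_of_lt_one (by positivity) hrρ).mul_left 2
          have h11 := h9.add h10
          refine h11.congr fun n => ?_
          push_cast; ring
        have hbase' : Summable (fun n : ℕ => 4*ρ*(((n:ℝ)+2) * (r*ρ)^n)) := hbase.mul_left _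
        obtain ⟨N, hN⟩ := eventually_atTop.1 (hbev r hr1 hr_lt1)
        rw [← summable_nat_add_iff N]
        have hbase'' : Summable (fun n : ℕ => 4*ρ*((((n+N:ℕ):ℝ)+2) * (r*ρ)^(n+N))) :=
          (summable_nat_add_iff N).2 hbase'
        refine Summable.of_nonneg_of_le (fun n => mul_nonneg (mul_nonneg (by positivity) (hc0 _))
          (by positivity)) (fun n => ?_) hbase''
        have hcb : c (n+N) ≤ 4 * r^(n+N) := by
          have hB1 := hN (n+N) (by omega)
          have hB2 := hN (n+N+1) (by omega)
          have hB3 : r^(n+N+1) ≤ r^(n+N) := pow_le_pow_of_le_one hr0.le hr_lt1.le (by omega)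
          rw [hcdef]
          dsimp only
          linarith
        calc ((((n+N:ℕ)):ℝ) + 2) * c (n+N) * ρ ^ (n+N+1)
            ≤ ((((n+N:ℕ)):ℝ) + 2) * (4 * r^(n+N)) * ρ ^ (n+N+1) := by
              have : (0:ℝ) ≤ (((n+N:ℕ)):ℝ) + 2 := by positivity
              have hp0 : (0:ℝ) ≤ ρ ^ (n+N+1) := by positivity
              exact mul_le_mul_of_nonneg_right
                (mul_le_mul_of_nonneg_left hcb this) hp0
          _ = 4*ρ*((((n+N:ℕ):ℝ)+2) * (r*ρ)^(n+N)) := by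
              rw [mul_pow, pow_succ]; ring
      · -- the bound itself
        intro n z hz
        have he : (P (n+1)).eval z - (P n).eval z = (P (n+1) - P n).eval z :=
          (Polynomial.eval_sub _ _ _).symm
        rw [he]
        have hdeg : (P (n+1) - P n).natDegree ≤ n+1 :=
          le_trans (Polynomial.natDegree_sub_le _ _)
            (max_le (hPdeg (n+1)) (le_trans (hPdeg n) (Nat.le_succ n)))
        have h12 := poly_eval_bound hdeg (hqcoeff n) hρ1 hz
        refine h12.trans_eq ?_
        push_cast; ring
    -- pointwise summability on the ball of radius R
    have hsummable : ∀ z : ℂ, ‖z‖ < R →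
        Summable (fun n => (P (n+1)).eval z - (P n).eval z) := by
      intro z hz
      obtain ⟨u, hu, hub⟩ := key (max 1 (‖z‖)) (le_max_left _ _) (max_lt hR hz)
      exact Summable.of_norm_bounded (g := u) hu (fun n => by
        exact hub n z (le_max_right _ _))
    set F : ℂ → ℂ := fun z => (P 0).eval z + ∑' n, ((P (n+1)).eval z - (P n).eval z)
      with hFdef
    refine ⟨F, ?_, ?_⟩
    · -- differentiability
      intro z₀ hz₀
      have hz₀R : ‖z₀‖ < R := by
        simpa [Complex.dist_eq] using mem_ball.1 hz₀
      set m := max 1 (‖z₀‖) with hmdef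
      have hmR : m < R := max_lt hR hz₀R
      have hm1 : 1 ≤ m := le_max_left _ _
      set ρ := (m + R)/2 with hρdef
      have hρ1 : 1 ≤ ρ := by rw [hρdef]; linarith
      have hρR : ρ < R := by rw [hρdef]; linarith
      have hmρ : m < ρ := by rw [hρdef]; linarith
      obtain ⟨u, hu, hub⟩ := key ρ hρ1 hρR
      have hdiff : DifferentiableOn ℂ
          (fun z => ∑' n, ((P (n+1)).eval z - (P n).eval z)) (ball (0:ℂ) ρ) := by
        refine Complex.differentiableOn_tsum_of_summable_norm hu
          (fun i => (((P (i+1)).differentiable).sub ((P i).differentiable)).differentiableOn)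
          isOpen_ball ?_
        intro i w hw
        have hwρ : ‖w‖ ≤ ρ := by
          have := mem_ball.1 hw
          rw [Complex.dist_eq, sub_zero] at this
          exact this.le
        exact hub i w hwρ
      have hdiffF : DifferentiableOn ℂ F (ball (0:ℂ) ρ) :=
        (((P 0).differentiable).differentiableOn).add hdiff
      have hz₀mem : z₀ ∈ ball (0:ℂ) ρ := by
        rw [mem_ball, Complex.dist_eq, sub_zero]
        exact lt_of_le_of_lt (le_max_right 1 _) hmρ
      exact ((hdiffF z₀ hz₀mem).differentiableAt
        (isOpen_ball.mem_nhds hz₀mem)).differentiableWithinAt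
    · -- EqOn F f on the closed unit disk
      intro z hz
      have hz1 : ‖z‖ ≤ 1 := by
        simpa [Complex.dist_eq] using mem_closedBall.1 hz
      have hsm := hsummable z (lt_of_le_of_lt hz1 hR)
      have h1 : Tendsto (fun N => (P N).eval z) atTop (𝓝 (F z)) := by
        have h2 := hsm.hasSum.tendsto_sum_nat
        have h3 := h2.const_add ((P 0).eval z)
        refine h3.congr fun N => ?_
        rw [Finset.sum_range_sub (fun n => (P n).eval z)]
        ring
      have h4 : Tendsto (fun N => (P N).eval z) atTop (𝓝 (f z)) := by
        have h5 : ∀ N, dist ((P N).eval z) (f z) ≤ b N := fun N => by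
          rw [dist_comm, Complex.dist_eq]
          exact hpoint N z hz
        have h6 : Tendsto b atTop (𝓝 0) := by
          set r := (R⁻¹ + 1)/2 with hrdef
          have hr1 : R⁻¹ < r := by rw [hrdef]; linarith
          have hr2 : r < 1 := by rw [hrdef]; linarith
          have hr0 : (0:ℝ) ≤ r := le_trans hRinv0.le hr1.le
          refine squeeze_zero' (Eventually.of_forall hb0)
            ((hbev r hr1 hr2).mono fun n hn => hn.le) ?_
          have h7 := (tendsto_pow_atTop_nhds_zero_of_lt_one hr0 hr2).const_mul 2
          simpa using h7
        rw [tendsto_iff_dist_tendsto_zero]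
        exact squeeze_zero' (Eventually.of_forall fun N => dist_nonneg)
          (Eventually.of_forall h5) h6
      exact tendsto_nhds_unique h1 h4
  · -- backward: extension ⟹ good approximation
    rintro ⟨F, hF, hFf⟩
    by_contra hcon
    push_neg at hcon
    have hmin : 1/R < min 1 (limsup (fun n : ℕ =>
        dnApprox (Metric.closedBall (0 : ℂ) 1) f n ^ ((n : ℝ)⁻¹)) atTop) := by
      refine lt_min ?_ hcon
      rw [div_lt_one hRpos]
      exact hR
    obtain ⟨t, ht1, ht2⟩ := exists_between hmin
    have ht0 : 0 < t := lt_trans (by positivity) ht1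
    have htlt1 : t < 1 := lt_of_lt_of_le ht2 (min_le_left _ _)
    have hρ1 : 1 < t⁻¹ := (one_lt_inv₀ ht0).2 htlt1
    have hρR : t⁻¹ < R := by
      rw [one_div] at ht1
      exact (inv_lt_comm₀ ht0 hRpos).2 ht1
    obtain ⟨D, hD, hb⟩ := dn_geom_bound hF hFf hρ1 hρR
    have hlt := limsup_rpow_le (dnApprox_nonneg _ f) hD
      (by positivity : (0:ℝ) < (t⁻¹)⁻¹) (by simpa using hb)
    rw [inv_inv] at hlt
    exact absurd (lt_of_le_of_lt hlt (lt_of_lt_of_le ht2 (min_le_right _ _))) (lt_irrefl _)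
end
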